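/- Let G be a connected non-trivial graph of order n and let H = {H_1,...,H_n} be a family of non-trivial graphs. The corona product G⊙H is k-metric dimensional if and only if k = C(H) := min over i and over pairs of distinct vertices x,y of H_i of |(N_{H_i}(x) △ N_{H_i}(y)) ∪ {x,y}|. -/

import Mathlib

open SimpleGraph

/-- `S` is a `k`-metric generator for `G`: every pair of distinct vertices is
distinguished (has different distances) by at least `k` vertices of `S`. -/
def kMetricGen {V : Type*} [Fintype V] (G : SimpleGraph V) (k : ℕ) (S : Set V) : Prop :=
  ∀ u v : V, u ≠ v → ∃ T : Finset V, ↑T ⊆ S ∧ k ≤ T.card ∧ ∀ w ∈ T, G.dist u w ≠ G.dist v w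

/-- `G` is `k`-metric dimensional: `k` is the largest integer admitting a `k`-metric generator. -/
def kMetricDimensional {V : Type*} [Fintype V] (G : SimpleGraph V) (k : ℕ) : Prop :=
  (∃ S : Set V, kMetricGen G k S) ∧ ∀ k' : ℕ, (∃ S : Set V, kMetricGen G k' S) → k' ≤ k

/-- The `k`-metric dimension of `G`. -/
noncomputable def kMetricDim {V : Type*} [Fintype V] (G : SimpleGraph V) (k : ℕ) : ℕ :=
  sInf {m | ∃ S : Finset V, kMetricGen G k ↑S ∧ S.card = m}

/-- A `k`-metric basis: a minimum-cardinality `k`-metric generator. -/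
def kMetricBasis {V : Type*} [Fintype V] (G : SimpleGraph V) (k : ℕ) (B : Finset V) : Prop :=
  kMetricGen G k ↑B ∧ ∀ T : Finset V, kMetricGen G k ↑T → B.card ≤ T.card

/-- Auxiliary relation for the corona product. -/
def coronaRel {V : Type*} {W : V → Type*} (G : SimpleGraph V) (H : ∀ v, SimpleGraph (W v)) :
    (V ⊕ (Σ v, W v)) → (V ⊕ (Σ v, W v)) → Prop
  | Sum.inl a, Sum.inl b => G.Adj a b
  | Sum.inl a, Sum.inr b => a = b.1
  | Sum.inr a, Sum.inr b => ∃ h : a.1 = b.1, (H b.1).Adj (h ▸ a.2) b.2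
  | _, _ => False

/-- The corona product `G ⊙ 𝓗`: one copy of `G`, and each vertex `v` of `G` joined by an
edge to every vertex of its own copy of `H v`. -/
def corona {V : Type*} {W : V → Type*} (G : SimpleGraph V) (H : ∀ v, SimpleGraph (W v)) :
    SimpleGraph (V ⊕ (Σ v, W v)) :=
  SimpleGraph.fromRel (coronaRel G H)

/-- The join `K₁ + H`: a new vertex (`none`) adjacent to every vertex of `H`. -/
def K1join {U : Type*} (H : SimpleGraph U) : SimpleGraph (Option U) :=
  SimpleGraph.fromRel (fun x y => match x, y with
    | none, some _ => True
    | some a, some b => H.Adj a b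
    | _, _ => False)

/-- `𝒞(H) = min_{x ≠ y} |(N(x) △ N(y)) ∪ {x,y}|`. -/
noncomputable def CC {U : Type*} (H : SimpleGraph U) : ℕ :=
  sInf {m | ∃ x y : U, x ≠ y ∧
    (symmDiff (H.neighborSet x) (H.neighborSet y) ∪ {x, y}).ncard = m}


section
variable {V : Type*} {W : V → Type*} {G : SimpleGraph V} {H : ∀ v, SimpleGraph (W v)}

lemma corona_adj_inl_inl {a b : V} :
    (corona G H).Adj (Sum.inl a) (Sum.inl b) ↔ G.Adj a b := by
  simp only [corona, fromRel_adj, coronaRel]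
  constructor
  · rintro ⟨-, h | h⟩
    · exact h
    · exact h.symm
  · intro h
    exact ⟨by simpa using h.ne, Or.inl h⟩

lemma corona_adj_inl_inr {a : V} {z : Σ v, W v} :
    (corona G H).Adj (Sum.inl a) (Sum.inr z) ↔ a = z.1 := by
  simp only [corona, fromRel_adj, coronaRel]
  constructor
  · rintro ⟨-, h | h⟩
    · exact h
    · exact h.elim
  · intro h
    exact ⟨by simp, Or.inl h⟩

lemma corona_adj_inr_inl {a : V} {z : Σ v, W v} :
    (corona G H).Adj (Sum.inr z) (Sum.inl a) ↔ a = z.1 := by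
  rw [adj_comm]; exact corona_adj_inl_inr

lemma corona_adj_inr_inr {v : V} {x y : W v} :
    (corona G H).Adj (Sum.inr ⟨v, x⟩) (Sum.inr ⟨v, y⟩) ↔ (H v).Adj x y := by
  simp only [corona, fromRel_adj, coronaRel]
  constructor
  · rintro ⟨hne, ⟨h, hadj⟩ | ⟨h, hadj⟩⟩
    · exact hadj
    · exact hadj.symm
  · intro h
    exact ⟨by simp [h.ne], Or.inl ⟨trivial, h⟩⟩

lemma corona_adj_inr_inr_fst {z z' : Σ v, W v}
    (h : (corona G H).Adj (Sum.inr z) (Sum.inr z')) : z.1 = z'.1 := by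
  rcases h with ⟨-, ⟨h, -⟩ | ⟨h, -⟩⟩
  · exact h
  · exact h.symm

/-- projection to the base graph -/
def cproj : (V ⊕ (Σ v, W v)) → V := Sum.elim id Sigma.fst

lemma cproj_adj {x y : V ⊕ (Σ v, W v)} (h : (corona G H).Adj x y) :
    cproj x = cproj y ∨ G.Adj (cproj x) (cproj y) := by
  match x, y with
  | Sum.inl a, Sum.inl b => exact Or.inr (corona_adj_inl_inl.1 h)
  | Sum.inl a, Sum.inr z => exact Or.inl (corona_adj_inl_inr.1 h)
  | Sum.inr z, Sum.inl a => exact Or.inl (corona_adj_inr_inl.1 h).symm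
  | Sum.inr z, Sum.inr z' => exact Or.inl (corona_adj_inr_inr_fst h)

lemma exists_walk_cproj {x y : V ⊕ (Σ v, W v)} (p : (corona G H).Walk x y) :
    ∃ q : G.Walk (cproj x) (cproj y), q.length ≤ p.length := by
  induction p with
  | nil => exact ⟨SimpleGraph.Walk.nil, le_refl _⟩
  | cons h p ih =>
    obtain ⟨q, hq⟩ := ih
    rcases cproj_adj h with he | ha
    · exact ⟨q.copy he.symm rfl, by simpa using hq.trans (Nat.le_succ _)⟩
    · exact ⟨SimpleGraph.Walk.cons ha q, by simpa using hq⟩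

lemma dist_cproj_le {x y : V ⊕ (Σ v, W v)} (p : (corona G H).Walk x y) :
    G.dist (cproj x) (cproj y) ≤ p.length := by
  obtain ⟨q, hq⟩ := exists_walk_cproj p
  exact (SimpleGraph.dist_le q).trans hq

end
section
variable {V : Type*} {W : V → Type*} {G : SimpleGraph V} {H : ∀ v, SimpleGraph (W v)}

/-- lower bound: walks from a copy to the base -/
lemma walk_to_inl_lb :
    ∀ {x z : V ⊕ (Σ v, W v)} (p : (corona G H).Walk x z) {v : V} {y : W v} {a : V},
      x = Sum.inr ⟨v, y⟩ → z = Sum.inl a → G.dist v a + 1 ≤ p.length := by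
  intro x z p
  induction p with
  | nil => intro v y a h h'; subst h; simp at h'
  | @cons x u _ h p ih =>
    intro v y a hx hz
    subst hx; subst hz
    match u, h with
    | Sum.inl b, h =>
      have hb : b = v := corona_adj_inr_inl.1 h
      have h1 := dist_cproj_le (G := G) (H := H) p
      simp only [cproj, Sum.elim_inl, id] at h1
      have h2 : G.dist v a = G.dist b a := by rw [hb]
      simp only [SimpleGraph.Walk.length_cons]
      omega
    | Sum.inr z, h =>
      have hz : v = z.1 := corona_adj_inr_inr_fst h
      have h1 := ih (v := z.1) (y := z.2) (a := a) rfl rfl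
      rw [← hz] at h1
      simp only [SimpleGraph.Walk.length_cons]
      omega

lemma walk_to_inr_lb :
    ∀ {x z : V ⊕ (Σ v, W v)} (p : (corona G H).Walk x z) {v : V} {y : W v} {u : V} {t : W u},
      x = Sum.inr ⟨v, y⟩ → z = Sum.inr ⟨u, t⟩ → v ≠ u → G.dist v u + 2 ≤ p.length := by
  intro x z p
  induction p with
  | nil =>
    intro v y u t h h' hne
    subst h
    rw [Sum.inr.injEq] at h'
    exact absurd (congrArg Sigma.fst h') hne
  | @cons x w _ h p ih =>
    intro v y u t hx hz hne
    subst hx; subst hz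
    match w, h with
    | Sum.inl b, h =>
      have hb : b = v := corona_adj_inr_inl.1 h
      have h1 := walk_to_inl_lb (G := G) (H := H) p.reverse (v := u) (y := t) (a := b) rfl rfl
      rw [SimpleGraph.Walk.length_reverse] at h1
      have h2 : G.dist v u = G.dist u b := by rw [hb, SimpleGraph.dist_comm]
      simp only [SimpleGraph.Walk.length_cons]
      omega
    | Sum.inr z, h =>
      have hz : v = z.1 := corona_adj_inr_inr_fst h
      have h1 := ih (v := z.1) (y := z.2) (u := u) (t := t) rfl rfl (hz ▸ hne)
      rw [← hz] at h1
      simp only [SimpleGraph.Walk.length_cons]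
      omega

end
section
variable {V : Type*} {W : V → Type*} {G : SimpleGraph V} {H : ∀ v, SimpleGraph (W v)}

/-- inclusion of the base graph -/
def inlHom (G : SimpleGraph V) (H : ∀ v, SimpleGraph (W v)) : G →g corona G H where
  toFun := Sum.inl
  map_rel' := fun h => corona_adj_inl_inl.2 h

lemma adj_inl_inr' (v : V) (y : W v) :
    (corona G H).Adj (Sum.inl v) (Sum.inr ⟨v, y⟩) :=
  corona_adj_inl_inr.2 rfl

lemma adj_inr_inl' (v : V) (y : W v) :
    (corona G H).Adj (Sum.inr ⟨v, y⟩) (Sum.inl v) :=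
  corona_adj_inr_inl.2 rfl

variable (hG : G.Connected)
include hG

lemma corona_dist_inl_inl (a b : V) :
    (corona G H).dist (Sum.inl a) (Sum.inl b) = G.dist a b := by
  obtain ⟨p, hp⟩ := (hG a b).exists_walk_length_eq_dist
  have hle : (corona G H).dist (Sum.inl a) (Sum.inl b) ≤ G.dist a b := by
    have := SimpleGraph.dist_le (p.map (inlHom G H))
    rw [SimpleGraph.Walk.length_map, hp] at this
    exact this
  have hreach : (corona G H).Reachable (Sum.inl a) (Sum.inl b) :=
    ⟨p.map (inlHom G H)⟩
  obtain ⟨q, hq⟩ := hreach.exists_walk_length_eq_dist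
  have hge := dist_cproj_le (G := G) (H := H) q
  simp only [cproj, Sum.elim_inl, id] at hge
  omega

lemma corona_dist_inl_inr (a v : V) (y : W v) :
    (corona G H).dist (Sum.inl a) (Sum.inr ⟨v, y⟩) = G.dist a v + 1 := by
  obtain ⟨p, hp⟩ := (hG a v).exists_walk_length_eq_dist
  have hle : (corona G H).dist (Sum.inl a) (Sum.inr ⟨v, y⟩) ≤ G.dist a v + 1 := by
    have := SimpleGraph.dist_le ((p.map (inlHom G H)).concat (adj_inl_inr' v y))
    have hc := SimpleGraph.Walk.length_concat (p.map (inlHom G H)) (adj_inl_inr' (G := G) (H := H) v y)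
    rw [SimpleGraph.Walk.length_map, hp] at hc
    exact this.trans hc.le
  have hreach : (corona G H).Reachable (Sum.inl a) (Sum.inr ⟨v, y⟩) :=
    ⟨(p.map (inlHom G H)).concat (adj_inl_inr' v y)⟩
  obtain ⟨q, hq⟩ := hreach.exists_walk_length_eq_dist
  have hge := walk_to_inl_lb (G := G) (H := H) q.reverse (v := v) (y := y) (a := a) rfl rfl
  rw [SimpleGraph.Walk.length_reverse] at hge
  rw [SimpleGraph.dist_comm] at hge
  omega

lemma corona_dist_inr_inl (a v : V) (y : W v) :
    (corona G H).dist (Sum.inr ⟨v, y⟩) (Sum.inl a) = G.dist a v + 1 := by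
  rw [SimpleGraph.dist_comm]; exact corona_dist_inl_inr hG a v y

lemma corona_dist_inr_inr_ne (u v : V) (x : W u) (y : W v) (huv : u ≠ v) :
    (corona G H).dist (Sum.inr ⟨u, x⟩) (Sum.inr ⟨v, y⟩) = G.dist u v + 2 := by
  obtain ⟨p, hp⟩ := (hG u v).exists_walk_length_eq_dist
  have hle : (corona G H).dist (Sum.inr ⟨u, x⟩) (Sum.inr ⟨v, y⟩) ≤ G.dist u v + 2 := by
    have := SimpleGraph.dist_le (SimpleGraph.Walk.cons (adj_inr_inl' u x)
      ((p.map (inlHom G H)).concat (adj_inl_inr' v y)))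
    have hc := SimpleGraph.Walk.length_concat (p.map (inlHom G H)) (adj_inl_inr' (G := G) (H := H) v y)
    rw [SimpleGraph.Walk.length_map, hp] at hc
    exact this.trans (Nat.succ_le_succ hc.le)
  have hreach : (corona G H).Reachable (Sum.inr ⟨u, x⟩) (Sum.inr ⟨v, y⟩) :=
    ⟨SimpleGraph.Walk.cons (adj_inr_inl' u x)
      ((p.map (inlHom G H)).concat (adj_inl_inr' v y))⟩
  obtain ⟨q, hq⟩ := hreach.exists_walk_length_eq_dist
  have hge := walk_to_inr_lb (G := G) (H := H) q (v := u) (y := x) (u := v) (t := y) rfl rfl huv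
  omega

omit hG in
lemma corona_dist_inr_inr_adj {v : V} {x y : W v} (h : (H v).Adj x y) :
    (corona G H).dist (Sum.inr ⟨v, x⟩) (Sum.inr ⟨v, y⟩) = 1 :=
  SimpleGraph.dist_eq_one_iff_adj.2 (corona_adj_inr_inr.2 h)

omit hG in
lemma corona_dist_inr_inr_nonadj {v : V} {x y : W v} (hxy : x ≠ y) (h : ¬ (H v).Adj x y) :
    (corona G H).dist (Sum.inr ⟨v, x⟩) (Sum.inr ⟨v, y⟩) = 2 := by
  have hle : (corona G H).dist (Sum.inr ⟨v, x⟩) (Sum.inr ⟨v, y⟩) ≤ 2 := by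
    have := SimpleGraph.dist_le (SimpleGraph.Walk.cons (adj_inr_inl' (G := G) (H := H) v x)
      (SimpleGraph.Walk.cons (adj_inl_inr' (G := G) (H := H) v y) SimpleGraph.Walk.nil))
    simpa using this
  have hne : (Sum.inr ⟨v, x⟩ : V ⊕ (Σ v, W v)) ≠ Sum.inr ⟨v, y⟩ := by
    simp [hxy]
  have hreach : (corona G H).Reachable (Sum.inr ⟨v, x⟩) (Sum.inr ⟨v, y⟩) :=
    ⟨SimpleGraph.Walk.cons (adj_inr_inl' (G := G) (H := H) v x)
      (SimpleGraph.Walk.cons (adj_inl_inr' (G := G) (H := H) v y) SimpleGraph.Walk.nil)⟩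
  have h0 : (corona G H).dist (Sum.inr ⟨v, x⟩) (Sum.inr ⟨v, y⟩) ≠ 0 :=
    Nat.pos_iff_ne_zero.mp (hreach.pos_dist_of_ne hne)
  have h1 : (corona G H).dist (Sum.inr ⟨v, x⟩) (Sum.inr ⟨v, y⟩) ≠ 1 := by
    intro hc
    exact h (corona_adj_inr_inr.1 (SimpleGraph.dist_eq_one_iff_adj.1 hc))
  omega

end
section
variable {V : Type*} {W : V → Type*} {G : SimpleGraph V} {H : ∀ v, SimpleGraph (W v)}

open scoped Classical in
/-- distance within one copy is 0, 1 or 2 -/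
lemma corona_dist_copy_cases {v : V} (x w : W v) :
    (corona G H).dist (Sum.inr ⟨v, x⟩) (Sum.inr (⟨v, w⟩ : Σ v, W v)) =
      if x = w then 0 else if (H v).Adj x w then 1 else 2 := by
  by_cases h1 : x = w
  · subst h1; simp [SimpleGraph.dist_self]
  · by_cases h2 : (H v).Adj x w
    · simp [h1, h2, corona_dist_inr_inr_adj h2]
    · simp [h1, h2, corona_dist_inr_inr_nonadj h1 h2]

variable (hG : G.Connected)
include hG

open scoped Classical in
/-- characterization of distinguishers of a same-copy pair -/
lemma distinguish_iff {v : V} {x y : W v} (hxy : x ≠ y) (t : V ⊕ (Σ v, W v)) :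
    (corona G H).dist (Sum.inr ⟨v, x⟩) t ≠ (corona G H).dist (Sum.inr ⟨v, y⟩) t ↔
      ∃ w ∈ symmDiff ((H v).neighborSet x) ((H v).neighborSet y) ∪ {x, y},
        t = Sum.inr ⟨v, w⟩ := by
  match t with
  | Sum.inl b =>
    rw [corona_dist_inr_inl hG, corona_dist_inr_inl hG]
    simp
  | Sum.inr ⟨u, w⟩ =>
    by_cases huv : u = v
    · subst huv
      rw [corona_dist_copy_cases x w, corona_dist_copy_cases y w]
      constructor
      · intro hd
        refine ⟨w, ?_, rfl⟩
        simp only [Set.mem_union, Set.mem_symmDiff, Set.mem_insert_iff,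
          Set.mem_singleton_iff, SimpleGraph.mem_neighborSet]
        by_contra hw
        push_neg at hw
        obtain ⟨h12, h3, h4⟩ := hw
        have hxw : x ≠ w := fun hc => h3 hc.symm
        have hyw : y ≠ w := fun hc => h4 hc.symm
        rw [if_neg hxw, if_neg hyw] at hd
        by_cases hax : (H u).Adj x w
        · have hay : (H u).Adj y w := (h12.1 hax)
          rw [if_pos hax, if_pos hay] at hd; exact hd rfl
        · have hay : ¬ (H u).Adj y w := fun hc => hax (h12.2 hc)
          rw [if_neg hax, if_neg hay] at hd; exact hd rfl
      · rintro ⟨w', hw', hEq⟩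
        obtain rfl : w = w' := by simpa using hEq
        simp only [Set.mem_union, Set.mem_symmDiff, Set.mem_insert_iff,
          Set.mem_singleton_iff, SimpleGraph.mem_neighborSet] at hw'
        rcases hw' with (⟨hax, hay⟩ | ⟨hay, hax⟩) | (hwx | hwy)
        · have hxw : x ≠ w := fun hc => (H u).irrefl (hc ▸ hax)
          rw [if_neg hxw, if_pos hax]
          by_cases hyw : y = w
          · rw [if_pos hyw]; decide
          · rw [if_neg hyw, if_neg hay]; decide
        · have hyw : y ≠ w := fun hc => (H u).irrefl (hc ▸ hay)
          rw [if_neg hyw, if_pos hay]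
          by_cases hxw : x = w
          · rw [if_pos hxw]; decide
          · rw [if_neg hxw, if_neg hax]; decide
        · subst hwx
          rw [if_pos rfl, if_neg (Ne.symm hxy)]
          split <;> decide
        · subst hwy
          rw [if_pos rfl, if_neg hxy]
          split <;> decide
    · rw [corona_dist_inr_inr_ne hG v u x w (Ne.symm huv),
        corona_dist_inr_inr_ne hG v u y w (Ne.symm huv)]
      simp [huv, Ne.symm huv]

end
section
open scoped Classical
variable {V : Type*} [Fintype V] [Nontrivial V] {W : V → Type*} [∀ v, Fintype (W v)]
  [∀ v, Nontrivial (W v)] {G : SimpleGraph V} {H : ∀ v, SimpleGraph (W v)}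

noncomputable def copyT (W : V → Type*) [∀ v, Fintype (W v)] (v : V) :
    Finset (V ⊕ Σ v, W v) :=
  Finset.univ.image (fun w : W v => Sum.inr ⟨v, w⟩)

lemma card_copyT (v : V) : (copyT W v).card = Fintype.card (W v) := by
  rw [copyT, Finset.card_image_of_injective _ (fun a b h => by simpa using h)]
  simp

lemma mem_copyT {v : V} {t : V ⊕ Σ v, W v} :
    t ∈ copyT W v ↔ ∃ w : W v, t = Sum.inr ⟨v, w⟩ := by
  simp [copyT, eq_comm]

/-- the parameter 𝒞(𝓗) -/
noncomputable def coronaC (H : ∀ v, SimpleGraph (W v)) : ℕ :=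
  sInf {m | ∃ v, ∃ x y : W v, x ≠ y ∧
    (symmDiff ((H v).neighborSet x) ((H v).neighborSet y) ∪ {x, y}).ncard = m}

lemma coronaC_nonempty :
    {m | ∃ v, ∃ x y : W v, x ≠ y ∧
      (symmDiff ((H v).neighborSet x) ((H v).neighborSet y) ∪ {x, y}).ncard = m}.Nonempty := by
  obtain ⟨v⟩ := (inferInstance : Nonempty V)
  obtain ⟨x, y, hxy⟩ := exists_pair_ne (W v)
  exact ⟨_, v, x, y, hxy, rfl⟩

lemma coronaC_le_card (v : V) : coronaC H ≤ Fintype.card (W v) := by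
  obtain ⟨x, y, hxy⟩ := exists_pair_ne (W v)
  refine le_trans (Nat.sInf_le ⟨v, x, y, hxy, rfl⟩) ?_
  have := Set.ncard_le_ncard
    (Set.subset_univ (symmDiff ((H v).neighborSet x) ((H v).neighborSet y) ∪ {x, y}))
    Set.finite_univ
  simpa [Set.ncard_univ, Nat.card_eq_fintype_card] using this

variable (hG : G.Connected)
include hG

lemma corona_gen : kMetricGen (corona G H) (coronaC H) Set.univ := by
  have key : ∀ (a : V) (z : V ⊕ Σ v, W v), Sum.inl a ≠ z →
      ∃ T : Finset (V ⊕ Σ v, W v), coronaC H ≤ T.card ∧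
        ∀ w ∈ T, (corona G H).dist (Sum.inl a) w ≠ (corona G H).dist z w := by
    intro a z hne
    match z with
    | Sum.inl b =>
      have hab : a ≠ b := fun hc => hne (by rw [hc])
      refine ⟨copyT W a, by rw [card_copyT]; exact coronaC_le_card a, ?_⟩
      intro t ht
      obtain ⟨w, rfl⟩ := mem_copyT.1 ht
      rw [corona_dist_inl_inr hG, corona_dist_inl_inr hG, SimpleGraph.dist_self]
      have := hG.pos_dist_of_ne (Ne.symm hab)
      omega
    | Sum.inr ⟨v, y⟩ =>
      by_cases hva : v = a
      · subst hva
        obtain ⟨b, hb⟩ := exists_ne v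
        refine ⟨copyT W b, by rw [card_copyT]; exact coronaC_le_card b, ?_⟩
        intro t ht
        obtain ⟨w, rfl⟩ := mem_copyT.1 ht
        rw [corona_dist_inl_inr hG, corona_dist_inr_inr_ne hG v b y w (Ne.symm hb)]
        omega
      · refine ⟨copyT W a, by rw [card_copyT]; exact coronaC_le_card a, ?_⟩
        intro t ht
        obtain ⟨w, rfl⟩ := mem_copyT.1 ht
        rw [corona_dist_inl_inr hG, corona_dist_inr_inr_ne hG v a y w hva,
          SimpleGraph.dist_self]
        omega
  intro u z hne
  match u, z with
  | Sum.inl a, z =>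
    obtain ⟨T, h1, h2⟩ := key a z hne
    exact ⟨T, by simp, h1, h2⟩
  | Sum.inr zz, Sum.inl a =>
    obtain ⟨T, h1, h2⟩ := key a (Sum.inr zz) (Ne.symm hne)
    exact ⟨T, by simp, h1, fun w hw => (h2 w hw).symm⟩
  | Sum.inr ⟨u1, x⟩, Sum.inr ⟨v1, y⟩ =>
    by_cases huv : u1 = v1
    · subst huv
      have hxy : x ≠ y := by
        intro hc; exact hne (by rw [hc])
      set S := symmDiff ((H u1).neighborSet x) ((H u1).neighborSet y) ∪ {x, y} with hS
      refine ⟨(S.toFinite.toFinset).image (fun w => Sum.inr ⟨u1, w⟩), by simp, ?_, ?_⟩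
      · rw [Finset.card_image_of_injective _ (fun a b h => by simpa using h)]
        rw [← Set.ncard_eq_toFinset_card S S.toFinite]
        exact Nat.sInf_le ⟨u1, x, y, hxy, rfl⟩
      · intro t ht
        simp only [Finset.mem_image, Set.Finite.mem_toFinset] at ht
        obtain ⟨w, hw, rfl⟩ := ht
        exact (distinguish_iff hG hxy _).2 ⟨w, hw, rfl⟩
    · refine ⟨copyT W u1, by simp, by rw [card_copyT]; exact coronaC_le_card u1, ?_⟩
      intro t ht
      obtain ⟨w, rfl⟩ := mem_copyT.1 ht
      rw [corona_dist_copy_cases x w, corona_dist_inr_inr_ne hG v1 u1 y w (Ne.symm huv)]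
      have := hG.pos_dist_of_ne (Ne.symm huv)
      split_ifs <;> omega

lemma corona_gen_le {k' : ℕ} {S : Set (V ⊕ Σ v, W v)}
    (hS : kMetricGen (corona G H) k' S) : k' ≤ coronaC H := by
  obtain ⟨v0, x0, y0, hxy0, hnc⟩ := Nat.sInf_mem (coronaC_nonempty (H := H))
  have hne : (Sum.inr ⟨v0, x0⟩ : V ⊕ Σ v, W v) ≠ Sum.inr ⟨v0, y0⟩ := by simp [hxy0]
  obtain ⟨T, hsub, hcard, hdist⟩ := hS _ _ hne
  set S0 := symmDiff ((H v0).neighborSet x0) ((H v0).neighborSet y0) ∪ {x0, y0} with hS0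
  have hT : T ⊆ (S0.toFinite.toFinset).image (fun w => Sum.inr ⟨v0, w⟩) := by
    intro t ht
    obtain ⟨w, hw, rfl⟩ := (distinguish_iff hG hxy0 t).1 (hdist t ht)
    simp only [Finset.mem_image, Set.Finite.mem_toFinset]
    exact ⟨w, hw, rfl⟩
  have hcard2 := Finset.card_le_card hT
  rw [Finset.card_image_of_injective _ (fun a b h => by simpa using h)] at hcard2
  rw [← Set.ncard_eq_toFinset_card S0 S0.toFinite] at hcard2
  calc k' ≤ T.card := hcard
    _ ≤ S0.ncard := hcard2
    _ = coronaC H := hnc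

end

/-- the corona product is `k`-metric dimensional iff `k = 𝒞(𝓗)`. -/
theorem stmt_3 {V : Type*} [Fintype V] [Nontrivial V] {W : V → Type*} [∀ v, Fintype (W v)]
    [∀ v, Nontrivial (W v)] (G : SimpleGraph V) (hG : G.Connected)
    (H : ∀ v, SimpleGraph (W v)) (k : ℕ) :
    kMetricDimensional (corona G H) k ↔
      k = sInf {m | ∃ v, ∃ x y : W v, x ≠ y ∧
        (symmDiff ((H v).neighborSet x) ((H v).neighborSet y) ∪ {x, y}).ncard = m} := by
  have hC : sInf {m | ∃ v, ∃ x y : W v, x ≠ y ∧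
      (symmDiff ((H v).neighborSet x) ((H v).neighborSet y) ∪ {x, y}).ncard = m} =
      coronaC H := rfl
  rw [hC]
  constructor
  · rintro ⟨⟨S, hS⟩, hmax⟩
    refine le_antisymm (corona_gen_le hG hS) (hmax _ ⟨Set.univ, corona_gen hG⟩)
  · rintro rfl
    exact ⟨⟨Set.univ, corona_gen hG⟩, fun k' ⟨S, hS⟩ => corona_gen_le hG hS⟩
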